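/- Let X and Y be topological spaces, f : Y → X continuous, and (E, X, π) a bundle of complete metric spaces bounded by k (upper semicontinuous global distance, π continuous and open, ε-enlargement axiom). Let (E', Y, π') be the pullback of E along f in Top, with fibre metrics induced by the isometric identification E'_y ≅ E_{f(y)}. Then (E', Y, π') is again a bundle of complete metric spaces bounded by k. -/
import Mathlib


/-- A bundle of complete metric spaces bounded by `k` over `X`: a surjection `π : E → X`
with a complete metric of diameter `≤ k` on each fibre, such that the global distance on the
fibre product is upper semicontinuous, `π` is continuous and open, and every open set can be
`ε`-enlarged inside any open set around each of its points. -/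
structure MetricBundle (k : ℝ) (E X : Type*) [TopologicalSpace E] [TopologicalSpace X] where
  π : E → X
  d : E → E → ℝ
  surj : Function.Surjective π
  d_nonneg : ∀ e f, π e = π f → 0 ≤ d e f
  d_self : ∀ e, d e e = 0
  d_symm : ∀ e f, π e = π f → d e f = d f e
  d_triangle : ∀ e f g, π e = π f → π f = π g → d e g ≤ d e f + d f g
  d_eq_zero : ∀ e f, π e = π f → d e f = 0 → e = f
  d_bounded : ∀ e f, π e = π f → d e f ≤ k
  complete' : ∀ (x : X) (u : ℕ → E), (∀ n, π (u n) = x) →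
    (∀ ε > 0, ∃ N, ∀ m ≥ N, ∀ n ≥ N, d (u m) (u n) < ε) →
    ∃ l, π l = x ∧ ∀ ε > 0, ∃ N, ∀ n ≥ N, d (u n) l < ε
  usc : UpperSemicontinuous fun p : {p : E × E // π p.1 = π p.2} => d p.1.1 p.1.2
  cont_π : Continuous π
  open_π : IsOpenMap π
  enlarge : ∀ W : Set E, IsOpen W → ∀ f ∈ W, ∃ V : Set E, IsOpen V ∧ f ∈ V ∧ ∃ ε > 0,
    V ⊆ {e | ∃ g ∈ V, π e = π g ∧ d e g < ε} ∧ {e | ∃ g ∈ V, π e = π g ∧ d e g < ε} ⊆ W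

/-- The pullback of a bundle of complete metric spaces bounded by `k` along a continuous map
`f : Y → X`, computed in `Top` (with the fibre metrics induced by the isometric
identifications `E'_y ≅ E_{f y}`), is again a bundle of complete metric spaces bounded by
`k`. -/
theorem stmt_19 {E X Y : Type*} [TopologicalSpace E] [TopologicalSpace X]
    [TopologicalSpace Y] (k : ℝ) (B : MetricBundle k E X)
    (f : Y → X) (hf : Continuous f) :
    ∃ B' : MetricBundle k {p : Y × E // f p.1 = B.π p.2} Y,
      (B'.π = fun p => p.1.1) ∧ (B'.d = fun p q => B.d p.1.2 q.1.2) := by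
  -- the fibre-match lemma: if two points of the pullback lie over the same point of Y,
  -- their second components lie over the same point of X
  have key : ∀ p q : {p : Y × E // f p.1 = B.π p.2}, p.1.1 = q.1.1 →
      B.π p.1.2 = B.π q.1.2 := by
    intro p q h
    rw [← p.2, ← q.2, h]
  refine ⟨{
    π := fun p => p.1.1
    d := fun p q => B.d p.1.2 q.1.2
    surj := ?_
    d_nonneg := fun p q h => B.d_nonneg _ _ (key p q h)
    d_self := fun p => B.d_self _
    d_symm := fun p q h => B.d_symm _ _ (key p q h)
    d_triangle := fun p q r h1 h2 => B.d_triangle _ _ _ (key p q h1) (key q r h2)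
    d_eq_zero := ?_
    d_bounded := fun p q h => B.d_bounded _ _ (key p q h)
    complete' := ?_
    usc := ?_
    cont_π := (continuous_fst.comp continuous_subtype_val)
    open_π := ?_
    enlarge := ?_ }, rfl, rfl⟩
  · -- surjectivity
    intro y
    obtain ⟨e, he⟩ := B.surj (f y)
    exact ⟨⟨(y, e), he.symm⟩, rfl⟩
  · -- d_eq_zero
    intro p q h hd
    have h2 := B.d_eq_zero _ _ (key p q h) hd
    apply Subtype.ext
    exact Prod.ext h h2
  · -- completeness
    intro y u hu hcau
    have hu' : ∀ n, (u n).1.1 = y := hu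
    have hπ : ∀ n, B.π (u n).1.2 = f y := by
      intro n
      rw [← (u n).2, hu' n]
    obtain ⟨l, hl, hconv⟩ := B.complete' (f y) (fun n => (u n).1.2) hπ hcau
    exact ⟨⟨(y, l), hl.symm⟩, rfl, hconv⟩
  · -- upper semicontinuity
    set S := {p : {p : Y × E // f p.1 = B.π p.2} × {p : Y × E // f p.1 = B.π p.2} //
      p.1.1.1 = p.2.1.1}
    have hφc : Continuous (fun q : S => (⟨(q.1.1.1.2, q.1.2.1.2),
        key q.1.1 q.1.2 q.2⟩ : {p : E × E // B.π p.1 = B.π p.2})) := by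
      apply Continuous.subtype_mk
      exact ((continuous_snd.comp continuous_subtype_val).comp
          (continuous_fst.comp continuous_subtype_val)).prodMk
        ((continuous_snd.comp continuous_subtype_val).comp
          (continuous_snd.comp continuous_subtype_val))
    intro q c hc
    have := B.usc ⟨(q.1.1.1.2, q.1.2.1.2), key q.1.1 q.1.2 q.2⟩ c hc
    exact (hφc.continuousAt (x := q)).eventually this
  · -- openness of the projection
    intro W hW
    obtain ⟨U, hU, hUW⟩ := isOpen_induced_iff.mp hW
    rw [isOpen_iff_forall_mem_open]
    rintro y ⟨⟨⟨y', e⟩, hpe⟩, hmem, rfl⟩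
    have hmemU : (y', e) ∈ U := by rwa [← hUW] at hmem
    obtain ⟨V₁, O, hV₁, hO, hyV₁, heO, hsub⟩ := isOpen_prod_iff.mp hU y' e hmemU
    refine ⟨V₁ ∩ f ⁻¹' (B.π '' O), ?_, hV₁.inter ((B.open_π O hO).preimage hf),
      hyV₁, e, heO, hpe.symm⟩
    rintro z ⟨hzV₁, e', he'O, he'⟩
    refine ⟨⟨(z, e'), he'.symm⟩, ?_, rfl⟩
    rw [← hUW]
    exact hsub ⟨hzV₁, he'O⟩
  · -- enlargement
    intro W hW g hg
    obtain ⟨U, hU, hUW⟩ := isOpen_induced_iff.mp hW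
    have hgU : (g : Y × E) ∈ U := by rwa [← hUW] at hg
    obtain ⟨V₁, O, hV₁, hO, hgV₁, hgO, hsub⟩ := isOpen_prod_iff.mp hU g.1.1 g.1.2 hgU
    obtain ⟨V, hVopen, hgV, ε, hε, hV1, hV2⟩ := B.enlarge O hO g.1.2 hgO
    refine ⟨Subtype.val ⁻¹' (V₁ ×ˢ V),
      (hV₁.prod hVopen).preimage continuous_subtype_val, ⟨hgV₁, hgV⟩, ε, hε, ?_, ?_⟩
    · intro p hp
      exact ⟨p, hp, rfl, by show B.d p.1.2 p.1.2 < ε; rw [B.d_self]; exact hε⟩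
    · rintro p ⟨q, hqV, hpq, hd⟩
      have : p.1.2 ∈ O := hV2 ⟨q.1.2, hqV.2, key p q hpq, hd⟩
      rw [← hUW]
      exact hsub ⟨by have h : p.1.1 = q.1.1 := hpq; rw [h]; exact hqV.1, this⟩
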